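/- Fix integers K ≥ 1, D ≥ 1 and 0 ≤ d ≤ D, and reals α > 0, M > 0. Let u_1, …, u_K ∈ ℝ^D and let P_1, …, P_K be orthogonal projections of ℝ^D of rank d, and let the class-conditional densities be g_k = g_{u_k,P_k} with uniform priors π_k = 1/K. Let (Ω, 𝔽, ℙ) be a probability space and, for each n ∈ ℕ and class k, let û_{k,n} : Ω → ℝ^D and P̂_{k,n} : Ω → (rank-d orthogonal projections of ℝ^D) be random estimators such that, almost surely, û_{k,n} → u_k and P̂_{k,n} → P_k as n → ∞ for every k. For each ω and n let f̂_n^ω : ℝ^D → {1,…,K} be a measurable classifier with g_{û_{k,n}(ω),P̂_{k,n}(ω)} evaluated at x maximal at k = f̂_n^ω(x) for every x. Then almost surely R(f̂_n^ω) → R* as n → ∞. -/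

import Mathlib

open MeasureTheory Filter
open scoped RealInnerProductSpace ProbabilityTheory

/-- The NSS model density `g_{u,P}(x) = c · 𝟙_{‖P(x−u)‖ ≤ M} · exp(−α‖(x−u) − P(x−u)‖²)`,
with `c = (vol_d(M) · (π/α)^{(D−d)/2})⁻¹` and `vol_d(M) = π^{d/2} M^d / Γ(d/2 + 1)`. -/
noncomputable def modelDensity {D : ℕ} (d : ℕ) (α M : ℝ)
    (u : EuclideanSpace ℝ (Fin D))
    (P : EuclideanSpace ℝ (Fin D) →L[ℝ] EuclideanSpace ℝ (Fin D))
    (x : EuclideanSpace ℝ (Fin D)) : ℝ :=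
  ((Real.pi ^ ((d : ℝ) / 2) * M ^ d / Real.Gamma ((d : ℝ) / 2 + 1)) *
      (Real.pi / α) ^ (((D : ℝ) - (d : ℝ)) / 2))⁻¹ *
    (if ‖P (x - u)‖ ≤ M then Real.exp (-α * ‖(x - u) - P (x - u)‖ ^ 2) else 0)

noncomputable def nssF (D d : ℕ) (α M : ℝ) (y : Fin D → ℝ) : ℝ :=
  if (∑ i : Fin D, if (i : ℕ) < d then (y i)^2 else 0) ≤ M^2 then
    Real.exp (-α * ∑ i : Fin D, if (i : ℕ) < d then 0 else (y i)^2) else 0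

lemma nssF_nonneg (D d : ℕ) (α M : ℝ) (y : Fin D → ℝ) : 0 ≤ nssF D d α M y := by
  unfold nssF; split
  · positivity
  · exact le_refl 0

lemma measurable_nssF (D d : ℕ) (α M : ℝ) : Measurable (nssF D d α M) := by
  unfold nssF
  have h1 : Measurable fun y : Fin D → ℝ => ∑ i : Fin D, if (i : ℕ) < d then (y i)^2 else 0 :=
    Finset.measurable_sum _ fun i _ => by
      split
      · exact (measurable_pi_apply i).pow measurable_const
      · exact measurable_const
  have h2 : Measurable fun y : Fin D → ℝ => ∑ i : Fin D, if (i : ℕ) < d then 0 else (y i)^2 :=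
    Finset.measurable_sum _ fun i _ => by
      split
      · exact measurable_const
      · exact (measurable_pi_apply i).pow measurable_const
  exact Measurable.ite (measurableSet_le h1 measurable_const)
    (Real.measurable_exp.comp (h2.const_mul (-α))) measurable_const

lemma integrable_nssF {D d : ℕ} {α M : ℝ} (hα : 0 < α) (hM : 0 < M) :
    Integrable (nssF D d α M) := by
  classical
  set φ : Fin D → ℝ → ℝ := fun i t =>
    if (i : ℕ) < d then Set.indicator (Set.Icc (-M) M) (fun _ => (1:ℝ)) t
    else Real.exp (-α * t^2) with hφ
  have hφint : ∀ i, Integrable (φ i) := by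
    intro i
    by_cases h : (i : ℕ) < d
    · simpa [hφ, h] using
        (integrable_indicator_iff measurableSet_Icc).2
          (integrableOn_const measure_Icc_lt_top.ne)
    · simpa [hφ, h] using integrable_exp_neg_mul_sq hα
  have hφ0 : ∀ i t, 0 ≤ φ i t := by
    intro i t
    by_cases h : (i : ℕ) < d
    · simp only [hφ, if_pos h]
      exact Set.indicator_nonneg (fun _ _ => zero_le_one) t
    · simp only [hφ, if_neg h]
      exact (Real.exp_pos _).le
  have hprod : Integrable (fun y : Fin D → ℝ => ∏ i, φ i (y i)) :=
    Integrable.fintype_prod hφint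
  refine hprod.mono' (measurable_nssF D d α M).aestronglyMeasurable ?_
  refine Filter.Eventually.of_forall fun y => ?_
  rw [Real.norm_eq_abs, abs_of_nonneg (nssF_nonneg _ _ _ _ _)]
  unfold nssF
  split
  case isTrue hA =>
    have hterm : ∀ i : Fin D, (if (i:ℕ) < d then (y i)^2 else 0) ≤ M^2 := fun i =>
      le_trans (Finset.single_le_sum (f := fun i : Fin D => if (i:ℕ) < d then (y i)^2 else 0)
        (fun j _ => by positivity) (Finset.mem_univ i)) hA
    rw [Finset.mul_sum, Real.exp_sum]
    refine Finset.prod_le_prod (fun i _ => (Real.exp_pos _).le) (fun i _ => ?_)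
    by_cases h : (i : ℕ) < d
    · have h2 : (y i)^2 ≤ M^2 := by simpa [h] using hterm i
      have hmem : y i ∈ Set.Icc (-M) M := by
        constructor <;> nlinarith
      simp [hφ, h, Set.indicator_of_mem hmem]
    · simp [hφ, h]
  case isFalse =>
    exact Finset.prod_nonneg fun i _ => hφ0 i (y i)

lemma nssNull {D d : ℕ} (hdD : d ≤ D) {M : ℝ} (hM : 0 < M) :
    volume {y : Fin D → ℝ | (∑ i : Fin D, if (i : ℕ) < d then (y i)^2 else 0) = M^2} = 0 := by
  classical
  rcases Nat.eq_zero_or_pos d with hd | hd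
  · have : {y : Fin D → ℝ | (∑ i : Fin D, if (i : ℕ) < d then (y i)^2 else 0) = M^2} = ∅ := by
      ext y
      simp only [Set.mem_setOf_eq, Set.mem_empty_iff_false, iff_false, hd]
      simp only [Nat.not_lt_zero, if_false, Finset.sum_const_zero]
      intro h
      nlinarith
    rw [this, measure_empty]
  · obtain ⟨n, rfl⟩ : ∃ n, D = n + 1 := ⟨D - 1, by omega⟩
    have mp := measurePreserving_piFinSuccAbove (fun _ : Fin (n+1) => (volume : Measure ℝ)) 0
    set S : Set (ℝ × (Fin n → ℝ)) :=
      {p | p.1^2 + (∑ j : Fin n, if ((j : ℕ) + 1) < d then (p.2 j)^2 else 0) = M^2} with hS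
    have hSm : MeasurableSet S := by
      apply measurableSet_eq_fun ?_ measurable_const
      apply Measurable.add
      · exact measurable_fst.pow measurable_const
      · exact Finset.measurable_sum _ fun j _ => by
          split
          · exact ((measurable_pi_apply j).comp measurable_snd).pow measurable_const
          · exact measurable_const
    have hpre : {y : Fin (n+1) → ℝ | (∑ i : Fin (n+1), if (i : ℕ) < d then (y i)^2 else 0) = M^2}
        = (MeasurableEquiv.piFinSuccAbove (fun _ : Fin (n+1) => ℝ) 0) ⁻¹' S := by
      ext y
      simp only [Set.mem_setOf_eq, Set.mem_preimage, hS,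
        MeasurableEquiv.piFinSuccAbove_apply]
      rw [Fin.sum_univ_succ]
      simp [hd, Fin.succAbove_zero, Fin.tail]
    have hvol : (volume : Measure (∀ _ : Fin (n+1), ℝ)) = Measure.pi fun _ => volume := by
      rw [volume_pi]
    rw [hpre, hvol, mp.measure_preimage hSm.nullMeasurableSet]
    -- now kill the product measure
    have hswap : ((volume : Measure ℝ).prod (Measure.pi fun _ : Fin n => volume)) S
        = ((Measure.pi fun _ : Fin n => volume).prod (volume : Measure ℝ)) (Prod.swap ⁻¹' S) := by
      rw [← Measure.prod_swap, Measure.map_apply measurable_swap hSm]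
    rw [hswap, Measure.prod_apply (measurable_swap hSm)]
    have hzero : ∀ x : Fin n → ℝ,
        (volume : Measure ℝ) (Prod.mk x ⁻¹' (Prod.swap ⁻¹' S)) = 0 := by
      intro x
      set c : ℝ := ∑ j : Fin n, if ((j : ℕ) + 1) < d then (x j)^2 else 0 with hc
      have hset : (Prod.mk x ⁻¹' (Prod.swap ⁻¹' S)) = {t : ℝ | t^2 + c = M^2} := by
        ext t; simp [hS, hc]
      rw [hset]
      have hsub : {t : ℝ | t^2 + c = M^2} ⊆
          {Real.sqrt (M^2 - c), -Real.sqrt (M^2 - c)} := by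
        intro t ht
        simp only [Set.mem_setOf_eq] at ht
        have h1 : t^2 = M^2 - c := by linarith
        have h3 : Real.sqrt (M^2 - c) = |t| := by rw [← h1, Real.sqrt_sq_eq_abs]
        rcases abs_cases t with ⟨h4, _⟩ | ⟨h4, _⟩
        · left; rw [h3, h4]
        · right; rw [h3, h4]; simp
      exact measure_mono_null hsub
        (((Set.finite_singleton _).insert _).measure_zero _)
    calc (∫⁻ x, (volume : Measure ℝ) (Prod.mk x ⁻¹' (Prod.swap ⁻¹' S))
            ∂(Measure.pi fun _ : Fin n => volume))
        = ∫⁻ _, 0 ∂(Measure.pi fun _ : Fin n => volume) := by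
          apply lintegral_congr; intro x; rw [hzero x]
      _ = 0 := lintegral_zero

set_option maxHeartbeats 1000000 in

lemma nss_exists_isometry {D d : ℕ}
    (P : EuclideanSpace ℝ (Fin D) →L[ℝ] EuclideanSpace ℝ (Fin D))
    (hidem : P ∘L P = P)
    (hsymm : ∀ v w : EuclideanSpace ℝ (Fin D), ⟪P v, w⟫ = ⟪v, P w⟫)
    (hrank : Module.finrank ℝ
      (LinearMap.range (P : EuclideanSpace ℝ (Fin D) →ₗ[ℝ] EuclideanSpace ℝ (Fin D))) = d) :
    ∃ e : EuclideanSpace ℝ (Fin D) ≃ₗᵢ[ℝ] EuclideanSpace ℝ (Fin D),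
      ∀ z, ∀ i : Fin D, e (P z) i = if (i : ℕ) < d then e z i else 0 := by
  classical
  have hPP : ∀ z, P (P z) = P z := fun z => by
    have := ContinuousLinearMap.ext_iff.1 hidem z
    simpa using this
  have hfinE : Module.finrank ℝ (EuclideanSpace ℝ (Fin D)) = D := finrank_euclideanSpace_fin
  have hdD : d ≤ D := by
    have h := Submodule.finrank_le
      (LinearMap.range (P : EuclideanSpace ℝ (Fin D) →ₗ[ℝ] EuclideanSpace ℝ (Fin D)))
    rw [hfinE] at h; omega
  have hrankK : Module.finrank ℝ
      (LinearMap.ker (P : EuclideanSpace ℝ (Fin D) →ₗ[ℝ] EuclideanSpace ℝ (Fin D))) = D - d := by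
    have h := LinearMap.finrank_range_add_finrank_ker
      (P : EuclideanSpace ℝ (Fin D) →ₗ[ℝ] EuclideanSpace ℝ (Fin D))
    rw [hfinE, hrank] at h; omega
  set S := LinearMap.range (P : EuclideanSpace ℝ (Fin D) →ₗ[ℝ] EuclideanSpace ℝ (Fin D)) with hSdef
  set Kr := LinearMap.ker (P : EuclideanSpace ℝ (Fin D) →ₗ[ℝ] EuclideanSpace ℝ (Fin D)) with hKdef
  have hmemS : ∀ x, x ∈ S → P x = x := by
    rintro x ⟨z, rfl⟩
    exact hPP z
  have hmemK : ∀ x, x ∈ Kr → P x = 0 := fun x hx => hx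
  let b1 : OrthonormalBasis (Fin d) ℝ S :=
    (stdOrthonormalBasis ℝ S).reindex (finCongr hrank)
  let b2 : OrthonormalBasis (Fin (D - d)) ℝ Kr :=
    (stdOrthonormalBasis ℝ Kr).reindex (finCongr hrankK)
  let v : Fin D → EuclideanSpace ℝ (Fin D) := fun i =>
    if h : (i : ℕ) < d then (b1 ⟨i, h⟩ : EuclideanSpace ℝ (Fin D))
    else (b2 ⟨(i : ℕ) - d, by omega⟩ : EuclideanSpace ℝ (Fin D))
  have hvS : ∀ (i : Fin D) (h : (i : ℕ) < d), v i = (b1 ⟨i, h⟩ : EuclideanSpace ℝ (Fin D)) :=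
    fun i h => dif_pos h
  have hvK : ∀ (i : Fin D) (h : ¬ (i : ℕ) < d),
      v i = (b2 ⟨(i : ℕ) - d, by omega⟩ : EuclideanSpace ℝ (Fin D)) := fun i h => dif_neg h
  have hvmemS : ∀ (i : Fin D), (i : ℕ) < d → v i ∈ S := by
    intro i h; rw [hvS i h]; exact (b1 ⟨i, h⟩).2
  have hvmemK : ∀ (i : Fin D), ¬ (i : ℕ) < d → v i ∈ Kr := by
    intro i h; rw [hvK i h]; exact (b2 _).2
  have hPv : ∀ i : Fin D, P (v i) = if (i : ℕ) < d then v i else 0 := by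
    intro i
    by_cases h : (i : ℕ) < d
    · rw [if_pos h]; exact hmemS _ (hvmemS i h)
    · rw [if_neg h]; exact hmemK _ (hvmemK i h)
  -- orthonormality
  have hcross : ∀ a b : EuclideanSpace ℝ (Fin D), P a = a → P b = 0 → ⟪a, b⟫ = 0 := by
    intro a b ha hb
    rw [← ha, hsymm, hb, inner_zero_right]
  have hon : Orthonormal ℝ v := by
    rw [orthonormal_iff_ite]
    intro i j
    by_cases hi : (i : ℕ) < d <;> by_cases hj : (j : ℕ) < d
    · rw [hvS i hi, hvS j hj]
      have h2 := orthonormal_iff_ite.1 b1.orthonormal ⟨i, hi⟩ ⟨j, hj⟩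
      rw [Submodule.coe_inner] at h2
      rw [h2]
      congr 1
      simp only [Fin.mk.injEq, eq_iff_iff]
      exact ⟨fun h => Fin.ext h, fun h => congrArg Fin.val h⟩
    · rw [hcross _ _ (hmemS _ (hvmemS i hi)) (hmemK _ (hvmemK j hj)), if_neg]
      intro h; subst h; exact hj hi
    · have : ⟪v j, v i⟫ = 0 := hcross _ _ (hmemS _ (hvmemS j hj)) (hmemK _ (hvmemK i hi))
      rw [real_inner_comm] at this
      rw [this, if_neg]
      intro h; subst h; exact hi hj
    · rw [hvK i hi, hvK j hj]
      have h2 := orthonormal_iff_ite.1 b2.orthonormal ⟨(i : ℕ) - d, by omega⟩ ⟨(j : ℕ) - d, by omega⟩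
      rw [Submodule.coe_inner] at h2
      rw [h2]
      congr 1
      simp only [Fin.mk.injEq, eq_iff_iff]
      constructor
      · intro h; exact Fin.ext (by omega)
      · intro h; have := congrArg Fin.val h; omega
  -- spanning
  have hspan : ⊤ ≤ Submodule.span ℝ (Set.range v) := by
    intro x _
    have hSle : ∀ y, y ∈ S → y ∈ Submodule.span ℝ (Set.range v) := by
      intro y hy
      have hrepr := b1.sum_repr ⟨y, hy⟩
      have hco := congrArg (Subtype.val) hrepr
      simp only [AddSubmonoidClass.coe_finset_sum, SetLike.val_smul] at hco
      rw [← hco]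
      refine Submodule.sum_mem _ fun a _ => Submodule.smul_mem _ _ (Submodule.subset_span ?_)
      refine ⟨⟨(a : ℕ), by omega⟩, ?_⟩
      exact hvS _ (by simpa using a.2)
    have hKle : ∀ y, y ∈ Kr → y ∈ Submodule.span ℝ (Set.range v) := by
      intro y hy
      have hrepr := b2.sum_repr ⟨y, hy⟩
      have hco := congrArg (Subtype.val) hrepr
      simp only [AddSubmonoidClass.coe_finset_sum, SetLike.val_smul] at hco
      rw [← hco]
      refine Submodule.sum_mem _ fun a _ => Submodule.smul_mem _ _ (Submodule.subset_span ?_)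
      refine ⟨⟨d + (a : ℕ), by omega⟩, ?_⟩
      rw [hvK _ (by simp)]
      exact congrArg (fun t : Kr => (t : EuclideanSpace ℝ (Fin D)))
        (congrArg b2 (Fin.ext (by simp)))
    have hx : x = P x + (x - P x) := by abel
    rw [hx]
    refine Submodule.add_mem _ (hSle _ ⟨x, rfl⟩) (hKle _ ?_)
    have : P (x - P x) = 0 := by
      rw [map_sub, hPP, sub_self]
    exact this
  let B : OrthonormalBasis (Fin D) ℝ (EuclideanSpace ℝ (Fin D)) := OrthonormalBasis.mk hon hspan
  refine ⟨B.repr, fun z i => ?_⟩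
  have hBi : B i = v i := congrFun (OrthonormalBasis.coe_mk hon hspan) i
  rw [B.repr_apply_apply, B.repr_apply_apply, hBi]
  rw [← hsymm, hPv i]
  by_cases h : (i : ℕ) < d
  · rw [if_pos h, if_pos h]
  · rw [if_neg h, if_neg h, inner_zero_left]

lemma modelDensity_facts {D d : ℕ} {α M : ℝ} (hα : 0 < α) (hM : 0 < M)
    (u : EuclideanSpace ℝ (Fin D))
    (P : EuclideanSpace ℝ (Fin D) →L[ℝ] EuclideanSpace ℝ (Fin D))
    (hidem : P ∘L P = P)
    (hsymm : ∀ v w : EuclideanSpace ℝ (Fin D), ⟪P v, w⟫ = ⟪v, P w⟫)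
    (hrank : Module.finrank ℝ
      (LinearMap.range (P : EuclideanSpace ℝ (Fin D) →ₗ[ℝ] EuclideanSpace ℝ (Fin D))) = d) :
    Integrable (modelDensity d α M u P) ∧
    (∫ x, modelDensity d α M u P x =
      ((Real.pi ^ ((d : ℝ) / 2) * M ^ d / Real.Gamma ((d : ℝ) / 2 + 1)) *
        (Real.pi / α) ^ (((D : ℝ) - (d : ℝ)) / 2))⁻¹ * ∫ y : Fin D → ℝ, nssF D d α M y) ∧
    volume {x : EuclideanSpace ℝ (Fin D) | ‖P (x - u)‖ = M} = 0 := by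
  classical
  obtain ⟨e, he⟩ := nss_exists_isometry P hidem hsymm hrank
  have hdD : d ≤ D := by
    have h := Submodule.finrank_le
      (LinearMap.range (P : EuclideanSpace ℝ (Fin D) →ₗ[ℝ] EuclideanSpace ℝ (Fin D)))
    rw [finrank_euclideanSpace_fin] at h; omega
  set C : ℝ := ((Real.pi ^ ((d : ℝ) / 2) * M ^ d / Real.Gamma ((d : ℝ) / 2 + 1)) *
      (Real.pi / α) ^ (((D : ℝ) - (d : ℝ)) / 2))⁻¹ with hC
  -- squared norm identities
  have hnorm : ∀ w : EuclideanSpace ℝ (Fin D), ‖w‖^2 = ∑ i : Fin D, (w i)^2 := by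
    intro w
    rw [EuclideanSpace.norm_eq]
    rw [Real.sq_sqrt (by positivity)]
    congr 1; ext i; rw [Real.norm_eq_abs, sq_abs]
  have h1 : ∀ w : EuclideanSpace ℝ (Fin D),
      ‖P w‖^2 = ∑ i : Fin D, if (i : ℕ) < d then (e w i)^2 else 0 := by
    intro w
    rw [← e.norm_map (P w), hnorm]
    congr 1; ext i
    rw [he w i]
    by_cases h : (i : ℕ) < d
    · rw [if_pos h, if_pos h]
    · rw [if_neg h, if_neg h]
      norm_num
  have h2 : ∀ w : EuclideanSpace ℝ (Fin D),
      ‖w - P w‖^2 = ∑ i : Fin D, if (i : ℕ) < d then 0 else (e w i)^2 := by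
    intro w
    rw [← e.norm_map (w - P w), hnorm]
    congr 1; ext i
    rw [map_sub]
    have : (e w - e (P w)) i = e w i - e (P w) i := rfl
    rw [this, he w i]
    by_cases h : (i : ℕ) < d
    · rw [if_pos h, if_pos h]; norm_num
    · rw [if_neg h, if_neg h]; norm_num
  -- the transfer map
  set ψ : EuclideanSpace ℝ (Fin D) → (Fin D → ℝ) :=
    (MeasurableEquiv.toLp 2 (Fin D → ℝ)).symm ∘ (⇑e) ∘ (fun x => x - u) with hψdef
  have hψ : MeasurePreserving ψ volume volume :=
    (PiLp.volume_preserving_ofLp (ι := Fin D)).comp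
      ((e.measurePreserving).comp (measurePreserving_sub_right volume u))
  have hψemb : MeasurableEmbedding ψ :=
    ((MeasurableEquiv.measurableEmbedding _).comp
      (e.toMeasurableEquiv.measurableEmbedding)).comp
      (MeasurableEquiv.subRight u).measurableEmbedding
  have hψapp : ∀ x (i : Fin D), ψ x i = e (x - u) i := fun x i => rfl
  -- the transfer formula
  have hform : ∀ x, modelDensity d α M u P x = C * nssF D d α M (ψ x) := by
    intro x
    unfold modelDensity nssF
    rw [← hC]
    congr 1
    have hsq : ∑ i : Fin D, (if (i : ℕ) < d then ((ψ x) i)^2 else 0) = ‖P (x - u)‖^2 := by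
      rw [h1 (x - u)]; rfl
    have hsq2 : ∑ i : Fin D, (if (i : ℕ) < d then 0 else ((ψ x) i)^2) = ‖(x - u) - P (x - u)‖^2 := by
      rw [h2 (x - u)]; rfl
    refine if_congr ?_ ?_ rfl
    · rw [hsq]
      constructor
      · intro h; nlinarith [norm_nonneg (P (x - u))]
      · intro h; nlinarith [norm_nonneg (P (x - u))]
    · rw [hsq2]
  have hg_meas : Measurable (fun y : Fin D → ℝ => C * nssF D d α M y) :=
    (measurable_nssF D d α M).const_mul C
  have hg_int : Integrable (fun y : Fin D → ℝ => C * nssF D d α M y) :=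
    (integrable_nssF hα hM).const_mul C
  have hcomp : modelDensity d α M u P = (fun y => C * nssF D d α M y) ∘ ψ := by
    funext x; exact hform x
  refine ⟨?_, ?_, ?_⟩
  · rw [hcomp]
    exact (hψ.integrable_comp_emb hψemb).2 hg_int
  · rw [hcomp]
    have := hψ.integral_comp hψemb (fun y => C * nssF D d α M y)
    rw [Function.comp_def]  -- align
    rw [this]
    rw [MeasureTheory.integral_const_mul]
  · have hset : {x : EuclideanSpace ℝ (Fin D) | ‖P (x - u)‖ = M}
        = ψ ⁻¹' {y : Fin D → ℝ | (∑ i : Fin D, if (i : ℕ) < d then (y i)^2 else 0) = M^2} := by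
      ext x
      simp only [Set.mem_setOf_eq, Set.mem_preimage]
      have hsq : ∑ i : Fin D, (if (i : ℕ) < d then ((ψ x) i)^2 else 0) = ‖P (x - u)‖^2 := by
        rw [h1 (x - u)]; rfl
      rw [hsq]
      constructor
      · intro h; rw [h]
      · intro h; nlinarith [norm_nonneg (P (x - u))]
    rw [hset]
    have hNm : MeasurableSet {y : Fin D → ℝ |
        (∑ i : Fin D, if (i : ℕ) < d then (y i)^2 else 0) = M^2} := by
      apply measurableSet_eq_fun ?_ measurable_const
      exact Finset.measurable_sum _ fun i _ => by
        split
        · exact (measurable_pi_apply i).pow measurable_const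
        · exact measurable_const
    rw [hψ.measure_preimage hNm.nullMeasurableSet]
    exact nssNull hdD hM

lemma modelDensity_nonneg {D d : ℕ} {α M : ℝ} (hα : 0 < α) (hM : 0 < M)
    (u : EuclideanSpace ℝ (Fin D))
    (P : EuclideanSpace ℝ (Fin D) →L[ℝ] EuclideanSpace ℝ (Fin D))
    (x : EuclideanSpace ℝ (Fin D)) : 0 ≤ modelDensity d α M u P x := by
  unfold modelDensity
  have hC : (0:ℝ) ≤ ((Real.pi ^ ((d : ℝ) / 2) * M ^ d / Real.Gamma ((d : ℝ) / 2 + 1)) *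
      (Real.pi / α) ^ (((D : ℝ) - (d : ℝ)) / 2))⁻¹ := by
    apply inv_nonneg.2
    apply mul_nonneg
    · apply div_nonneg
      · exact mul_nonneg (Real.rpow_nonneg Real.pi_pos.le _) (pow_nonneg hM.le _)
      · exact (Real.Gamma_pos_of_pos (by positivity)).le
    · exact Real.rpow_nonneg (div_nonneg Real.pi_pos.le hα.le) _
  apply mul_nonneg hC
  split
  · exact (Real.exp_pos _).le
  · exact le_refl 0

lemma measurable_modelDensity {D : ℕ} (d : ℕ) (α M : ℝ)
    (u : EuclideanSpace ℝ (Fin D))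
    (P : EuclideanSpace ℝ (Fin D) →L[ℝ] EuclideanSpace ℝ (Fin D)) :
    Measurable (modelDensity d α M u P) := by
  unfold modelDensity
  have c1 : Continuous fun x : EuclideanSpace ℝ (Fin D) => x - u :=
    continuous_id.sub continuous_const
  have c2 : Continuous fun x : EuclideanSpace ℝ (Fin D) => P (x - u) := P.continuous.comp c1
  refine (Measurable.ite ?_ ?_ measurable_const).const_mul _
  · exact measurableSet_le c2.norm.measurable measurable_const
  · exact (Real.continuous_exp.comp
      (continuous_const.mul (((c1.sub c2).norm.pow 2)))).measurable

/-- Scheffé-type lemma. -/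
lemma scheffe_tendsto {X : Type*} {mX : MeasurableSpace X} {μ : Measure X}
    {f : ℕ → X → ℝ} {g : X → ℝ}
    (hfi : ∀ n, Integrable (f n) μ) (hgi : Integrable g μ)
    (hf0 : ∀ n x, 0 ≤ f n x) (hg0 : ∀ x, 0 ≤ g x)
    (hae : ∀ᵐ x ∂μ, Tendsto (fun n => f n x) atTop (nhds (g x)))
    (hint : ∀ n, ∫ x, f n x ∂μ = ∫ x, g x ∂μ) :
    Tendsto (fun n => ∫ x, |f n x - g x| ∂μ) atTop (nhds 0) := by
  classical
  have hmin_int : ∀ n, Integrable (fun x => min (f n x) (g x)) μ := by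
    intro n
    have hm : AEStronglyMeasurable (fun x => min (f n x) (g x)) μ :=
      ((hfi n).aemeasurable.min hgi.aemeasurable).aestronglyMeasurable
    refine Integrable.mono' hgi hm (Filter.Eventually.of_forall fun x => ?_)
    rw [Real.norm_eq_abs, abs_of_nonneg (le_min (hf0 n x) (hg0 x))]
    exact min_le_right _ _
  have habs : ∀ n x, |f n x - g x| = f n x + g x - 2 * min (f n x) (g x) := by
    intro n x
    rcases le_total (f n x) (g x) with h | h
    · rw [min_eq_left h, abs_of_nonpos (by linarith)]; ring
    · rw [min_eq_right h, abs_of_nonneg (by linarith)]; ring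
  have hmin_tendsto : Tendsto (fun n => ∫ x, min (f n x) (g x) ∂μ) atTop (nhds (∫ x, g x ∂μ)) := by
    refine tendsto_integral_of_dominated_convergence g
      (fun n => (hmin_int n).aestronglyMeasurable) hgi ?_ ?_
    · intro n
      refine Filter.Eventually.of_forall fun x => ?_
      rw [Real.norm_eq_abs, abs_of_nonneg (le_min (hf0 n x) (hg0 x))]
      exact min_le_right _ _
    · filter_upwards [hae] with x hx
      have : Tendsto (fun n => min (f n x) (g x)) atTop (nhds (min (g x) (g x))) :=
        hx.min tendsto_const_nhds
      simpa using this
  have hcalc : ∀ n, ∫ x, |f n x - g x| ∂μ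
      = ∫ x, g x ∂μ + ∫ x, g x ∂μ - 2 * ∫ x, min (f n x) (g x) ∂μ := by
    intro n
    have : (fun x => |f n x - g x|) = fun x => f n x + g x - 2 * min (f n x) (g x) := by
      funext x; exact habs n x
    have hadd : Integrable (fun x => f n x + g x) μ := (hfi n).add hgi
    have h2i : Integrable (fun x => 2 * min (f n x) (g x)) μ := (hmin_int n).const_mul 2
    rw [this, integral_sub hadd h2i, integral_add (hfi n) hgi,
      MeasureTheory.integral_const_mul, hint n]
  have : Tendsto (fun n => ∫ x, g x ∂μ + ∫ x, g x ∂μ - 2 * ∫ x, min (f n x) (g x) ∂μ)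
      atTop (nhds (∫ x, g x ∂μ + ∫ x, g x ∂μ - 2 * ∫ x, g x ∂μ)) :=
    tendsto_const_nhds.sub (hmin_tendsto.const_mul 2)
  rw [show (∫ x, g x ∂μ + ∫ x, g x ∂μ - 2 * ∫ x, g x ∂μ) = 0 by ring] at this
  exact this.congr fun n => (hcalc n).symm

/-- pointwise convergence of model densities off the boundary sphere. -/
lemma modelDensity_tendsto {D d : ℕ} {α M : ℝ}
    {u : EuclideanSpace ℝ (Fin D)} {P : EuclideanSpace ℝ (Fin D) →L[ℝ] EuclideanSpace ℝ (Fin D)}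
    {un : ℕ → EuclideanSpace ℝ (Fin D)}
    {Pn : ℕ → EuclideanSpace ℝ (Fin D) →L[ℝ] EuclideanSpace ℝ (Fin D)}
    (hu : Tendsto un atTop (nhds u)) (hP : Tendsto Pn atTop (nhds P))
    {x : EuclideanSpace ℝ (Fin D)} (hx : ‖P (x - u)‖ ≠ M) :
    Tendsto (fun n => modelDensity d α M (un n) (Pn n) x) atTop
      (nhds (modelDensity d α M u P x)) := by
  have hw : Tendsto (fun n => x - un n) atTop (nhds (x - u)) := tendsto_const_nhds.sub hu
  have happ : Continuous fun q : (EuclideanSpace ℝ (Fin D) →L[ℝ] EuclideanSpace ℝ (Fin D)) ×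
      EuclideanSpace ℝ (Fin D) => q.1 q.2 := isBoundedBilinearMap_apply.continuous
  have hPw : Tendsto (fun n => Pn n (x - un n)) atTop (nhds (P (x - u))) :=
    (happ.tendsto (P, x - u)).comp (hP.prodMk_nhds hw)
  set C : ℝ := ((Real.pi ^ ((d : ℝ) / 2) * M ^ d / Real.Gamma ((d : ℝ) / 2 + 1)) *
      (Real.pi / α) ^ (((D : ℝ) - (d : ℝ)) / 2))⁻¹ with hC
  rcases lt_or_gt_of_ne hx with h | h
  · have hev : ∀ᶠ n in atTop, ‖Pn n (x - un n)‖ < M :=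
      (hPw.norm).eventually_lt_const h
    have htarget : modelDensity d α M u P x
        = C * Real.exp (-α * ‖(x - u) - P (x - u)‖ ^ 2) := by
      unfold modelDensity; rw [← hC, if_pos h.le]
    rw [htarget]
    have hcont : Tendsto (fun n => C * Real.exp (-α * ‖(x - un n) - Pn n (x - un n)‖ ^ 2))
        atTop (nhds (C * Real.exp (-α * ‖(x - u) - P (x - u)‖ ^ 2))) := by
      refine Tendsto.const_mul C ?_
      refine (Real.continuous_exp.tendsto _).comp ?_
      exact (((hw.sub hPw).norm.pow 2).const_mul (-α))
    refine hcont.congr' ?_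
    filter_upwards [hev] with n hn
    unfold modelDensity; rw [← hC, if_pos hn.le]
  · have hev : ∀ᶠ n in atTop, M < ‖Pn n (x - un n)‖ :=
      (hPw.norm).eventually_const_lt h
    have htarget : modelDensity d α M u P x = 0 := by
      unfold modelDensity; rw [if_neg (not_le.2 h), mul_zero]
    rw [htarget]
    refine tendsto_const_nhds.congr' ?_
    filter_upwards [hev] with n hn
    unfold modelDensity; rw [if_neg (not_le.2 hn), mul_zero]


/-- strong consistency of the plug-in (nearest subspace) rule:
if the parameter estimates `û_{k,n}, P̂_{k,n}` converge almost surely to the true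
parameters `u_k, P_k`, then almost surely the risk of the plug-in classifiers `f̂_n^ω`
converges to the Bayes risk. -/
theorem nss_strong_consistency {Ω : Type*} [MeasureSpace Ω]
    [IsProbabilityMeasure (ℙ : Measure Ω)]
    {K D : ℕ} (hK : 1 ≤ K) (hD : 1 ≤ D) (d : ℕ) (hd : d ≤ D)
    (α M : ℝ) (hα : 0 < α) (hM : 0 < M)
    (u : Fin K → EuclideanSpace ℝ (Fin D))
    (P : Fin K → EuclideanSpace ℝ (Fin D) →L[ℝ] EuclideanSpace ℝ (Fin D))
    (hP_idem : ∀ k, P k ∘L P k = P k)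
    (hP_symm : ∀ k, ∀ v w : EuclideanSpace ℝ (Fin D), ⟪P k v, w⟫ = ⟪v, P k w⟫)
    (hP_rank : ∀ k, Module.finrank ℝ
      (LinearMap.range (P k : EuclideanSpace ℝ (Fin D) →ₗ[ℝ] EuclideanSpace ℝ (Fin D))) = d)
    (uhat : ℕ → Fin K → Ω → EuclideanSpace ℝ (Fin D))
    (Phat : ℕ → Fin K → Ω → EuclideanSpace ℝ (Fin D) →L[ℝ] EuclideanSpace ℝ (Fin D))
    (hPhat_idem : ∀ n k ω, Phat n k ω ∘L Phat n k ω = Phat n k ω)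
    (hPhat_symm : ∀ n k ω, ∀ v w : EuclideanSpace ℝ (Fin D),
      ⟪Phat n k ω v, w⟫ = ⟪v, Phat n k ω w⟫)
    (hPhat_rank : ∀ n k ω, Module.finrank ℝ
      (LinearMap.range
        (Phat n k ω : EuclideanSpace ℝ (Fin D) →ₗ[ℝ] EuclideanSpace ℝ (Fin D))) = d)
    (hconv : ∀ᵐ ω : Ω, ∀ k,
      Tendsto (fun n => uhat n k ω) atTop (nhds (u k)) ∧
      Tendsto (fun n => Phat n k ω) atTop (nhds (P k)))
    (fhat : ℕ → Ω → EuclideanSpace ℝ (Fin D) → Fin K)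
    (hfhat_meas : ∀ n ω, Measurable (fhat n ω))
    (hfhat : ∀ n ω x,
      modelDensity d α M (uhat n (fhat n ω x) ω) (Phat n (fhat n ω x) ω) x =
        ⨆ k, modelDensity d α M (uhat n k ω) (Phat n k ω) x) :
    ∀ᵐ ω : Ω,
      Tendsto (fun n =>
          1 - (1 / K : ℝ) * ∫ x, modelDensity d α M (u (fhat n ω x)) (P (fhat n ω x)) x)
        atTop
        (nhds (1 - (1 / K : ℝ) * ∫ x, ⨆ k, modelDensity d α M (u k) (P k) x)) := by
  classical
  have hKn : Nonempty (Fin K) := ⟨⟨0, hK⟩⟩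
  filter_upwards [hconv] with ω hω
  -- facts about the true densities
  have Ig : ∀ k, Integrable (modelDensity d α M (u k) (P k)) := fun k =>
    (modelDensity_facts hα hM (u k) (P k) (hP_idem k) (hP_symm k) (hP_rank k)).1
  have Vg : ∀ k, ∫ x, modelDensity d α M (u k) (P k) x =
      ((Real.pi ^ ((d : ℝ) / 2) * M ^ d / Real.Gamma ((d : ℝ) / 2 + 1)) *
        (Real.pi / α) ^ (((D : ℝ) - (d : ℝ)) / 2))⁻¹ * ∫ y : Fin D → ℝ, nssF D d α M y := fun k =>
    (modelDensity_facts hα hM (u k) (P k) (hP_idem k) (hP_symm k) (hP_rank k)).2.1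
  have Ng : ∀ k, volume {x : EuclideanSpace ℝ (Fin D) | ‖P k (x - u k)‖ = M} = 0 := fun k =>
    (modelDensity_facts hα hM (u k) (P k) (hP_idem k) (hP_symm k) (hP_rank k)).2.2
  have Igh : ∀ n k, Integrable (modelDensity d α M (uhat n k ω) (Phat n k ω)) := fun n k =>
    (modelDensity_facts hα hM _ _ (hPhat_idem n k ω) (hPhat_symm n k ω) (hPhat_rank n k ω)).1
  have Vgh : ∀ n k, ∫ x, modelDensity d α M (uhat n k ω) (Phat n k ω) x =
      ((Real.pi ^ ((d : ℝ) / 2) * M ^ d / Real.Gamma ((d : ℝ) / 2 + 1)) *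
        (Real.pi / α) ^ (((D : ℝ) - (d : ℝ)) / 2))⁻¹ * ∫ y : Fin D → ℝ, nssF D d α M y :=
    fun n k =>
    (modelDensity_facts hα hM _ _ (hPhat_idem n k ω) (hPhat_symm n k ω) (hPhat_rank n k ω)).2.1
  -- L¹ convergence of the estimated densities, via Scheffé
  have hT : ∀ k, Tendsto (fun n => ∫ x, |modelDensity d α M (uhat n k ω) (Phat n k ω) x -
      modelDensity d α M (u k) (P k) x|) atTop (nhds 0) := by
    intro k
    refine scheffe_tendsto (fun n => Igh n k) (Ig k)
      (fun n x => modelDensity_nonneg hα hM _ _ _) (fun x => modelDensity_nonneg hα hM _ _ _)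
      ?_ (fun n => (Vgh n k).trans (Vg k).symm)
    have hne : ∀ᵐ x : EuclideanSpace ℝ (Fin D), ‖P k (x - u k)‖ ≠ M := by
      rw [ae_iff]
      simpa using Ng k
    filter_upwards [hne] with x hx
    exact modelDensity_tendsto (hω k).1 (hω k).2 hx
  have hTsum : Tendsto (fun n => 2 * ∑ k : Fin K,
      ∫ x, |modelDensity d α M (uhat n k ω) (Phat n k ω) x -
        modelDensity d α M (u k) (P k) x|) atTop (nhds 0) := by
    have h := tendsto_finset_sum (Finset.univ : Finset (Fin K)) (fun k _ => hT k)
    simpa using h.const_mul (2 : ℝ)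
  -- integrability package
  have Iabs : ∀ n k, Integrable (fun x => |modelDensity d α M (uhat n k ω) (Phat n k ω) x -
      modelDensity d α M (u k) (P k) x|) := fun n k => ((Igh n k).sub (Ig k)).abs
  have hgm : ∀ k, Measurable (modelDensity d α M (u k) (P k)) := fun k =>
    measurable_modelDensity d α M (u k) (P k)
  have hsum_int : Integrable (fun x => ∑ k : Fin K, modelDensity d α M (u k) (P k) x) :=
    integrable_finset_sum _ fun k _ => Ig k
  have hgf_meas : ∀ n, Measurable
      (fun x => modelDensity d α M (u (fhat n ω x)) (P (fhat n ω x)) x) := by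
    intro n
    have heq : (fun x => modelDensity d α M (u (fhat n ω x)) (P (fhat n ω x)) x)
        = fun x => ∑ k : Fin K, if fhat n ω x = k then modelDensity d α M (u k) (P k) x else 0 := by
      funext x
      rw [Finset.sum_ite_eq]
      simp
    rw [heq]
    refine Finset.measurable_sum _ fun k _ => ?_
    have hsk : MeasurableSet {x : EuclideanSpace ℝ (Fin D) | fhat n ω x = k} := by
      have := hfhat_meas n ω (measurableSet_singleton k)
      simpa [Set.preimage, Set.mem_singleton_iff] using this
    exact Measurable.ite hsk (hgm k) measurable_const
  have hgf_le : ∀ n x, modelDensity d α M (u (fhat n ω x)) (P (fhat n ω x)) x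
      ≤ ∑ k : Fin K, modelDensity d α M (u k) (P k) x := fun n x =>
    Finset.single_le_sum (f := fun k => modelDensity d α M (u k) (P k) x)
      (fun k _ => modelDensity_nonneg hα hM _ _ _) (Finset.mem_univ _)
  have hgf_int : ∀ n, Integrable
      (fun x => modelDensity d α M (u (fhat n ω x)) (P (fhat n ω x)) x) := by
    intro n
    refine hsum_int.mono' (hgf_meas n).aestronglyMeasurable ?_
    refine Filter.Eventually.of_forall fun x => ?_
    rw [Real.norm_eq_abs, abs_of_nonneg (modelDensity_nonneg hα hM _ _ _)]
    exact hgf_le n x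
  have hsup_meas : Measurable (fun x => ⨆ k, modelDensity d α M (u k) (P k) x) :=
    Measurable.iSup fun k => hgm k
  have hsup_le : ∀ x, (⨆ k, modelDensity d α M (u k) (P k) x)
      ≤ ∑ k : Fin K, modelDensity d α M (u k) (P k) x := fun x =>
    ciSup_le fun k => Finset.single_le_sum (f := fun k => modelDensity d α M (u k) (P k) x)
      (fun k _ => modelDensity_nonneg hα hM _ _ _) (Finset.mem_univ _)
  have hsup_nonneg : ∀ x, 0 ≤ ⨆ k, modelDensity d α M (u k) (P k) x := by
    intro x
    have h := le_ciSup (f := fun k => modelDensity d α M (u k) (P k) x)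
      (Finite.bddAbove_range _) (Classical.arbitrary (Fin K))
    exact le_trans (modelDensity_nonneg hα hM _ _ _) h
  have hsup_int : Integrable (fun x => ⨆ k, modelDensity d α M (u k) (P k) x) := by
    refine hsum_int.mono' hsup_meas.aestronglyMeasurable ?_
    refine Filter.Eventually.of_forall fun x => ?_
    rw [Real.norm_eq_abs, abs_of_nonneg (hsup_nonneg x)]
    exact hsup_le x
  -- the two integral inequalities
  have hle1 : ∀ n, ∫ x, modelDensity d α M (u (fhat n ω x)) (P (fhat n ω x)) x
      ≤ ∫ x, ⨆ k, modelDensity d α M (u k) (P k) x := by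
    intro n
    refine integral_mono (hgf_int n) hsup_int fun x => ?_
    exact le_ciSup (f := fun k => modelDensity d α M (u k) (P k) x)
      (Finite.bddAbove_range _) (fhat n ω x)
  have hle2 : ∀ n, (∫ x, ⨆ k, modelDensity d α M (u k) (P k) x)
      ≤ (∫ x, modelDensity d α M (u (fhat n ω x)) (P (fhat n ω x)) x)
        + 2 * ∑ k : Fin K, ∫ x, |modelDensity d α M (uhat n k ω) (Phat n k ω) x -
            modelDensity d α M (u k) (P k) x| := by
    intro n
    have hpt : ∀ x, (⨆ k, modelDensity d α M (u k) (P k) x)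
        ≤ modelDensity d α M (u (fhat n ω x)) (P (fhat n ω x)) x
          + 2 * ∑ k : Fin K, |modelDensity d α M (uhat n k ω) (Phat n k ω) x -
              modelDensity d α M (u k) (P k) x| := by
      intro x
      obtain ⟨j, hj⟩ := exists_eq_ciSup_of_finite
        (f := fun k => modelDensity d α M (u k) (P k) x)
      have e1 : modelDensity d α M (u j) (P j) x
          - modelDensity d α M (uhat n j ω) (Phat n j ω) x
          ≤ |modelDensity d α M (uhat n j ω) (Phat n j ω) x
            - modelDensity d α M (u j) (P j) x| := by
        rw [abs_sub_comm]; exact le_abs_self _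
      have e2 : modelDensity d α M (uhat n j ω) (Phat n j ω) x
          ≤ modelDensity d α M (uhat n (fhat n ω x) ω) (Phat n (fhat n ω x) ω) x := by
        rw [hfhat n ω x]
        exact le_ciSup (f := fun k => modelDensity d α M (uhat n k ω) (Phat n k ω) x)
          (Finite.bddAbove_range _) j
      have e3 : modelDensity d α M (uhat n (fhat n ω x) ω) (Phat n (fhat n ω x) ω) x
          - modelDensity d α M (u (fhat n ω x)) (P (fhat n ω x)) x
          ≤ |modelDensity d α M (uhat n (fhat n ω x) ω) (Phat n (fhat n ω x) ω) x
            - modelDensity d α M (u (fhat n ω x)) (P (fhat n ω x)) x| := le_abs_self _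
      have h4 : ∀ k : Fin K, |modelDensity d α M (uhat n k ω) (Phat n k ω) x -
          modelDensity d α M (u k) (P k) x|
          ≤ ∑ k : Fin K, |modelDensity d α M (uhat n k ω) (Phat n k ω) x -
            modelDensity d α M (u k) (P k) x| := fun k =>
        Finset.single_le_sum (f := fun k => |modelDensity d α M (uhat n k ω) (Phat n k ω) x -
          modelDensity d α M (u k) (P k) x|) (fun k _ => abs_nonneg _) (Finset.mem_univ k)
      rw [← hj]
      linarith [h4 j, h4 (fhat n ω x), e1, e2, e3]
    have hRHS_int : Integrable (fun x =>
        modelDensity d α M (u (fhat n ω x)) (P (fhat n ω x)) x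
          + 2 * ∑ k : Fin K, |modelDensity d α M (uhat n k ω) (Phat n k ω) x -
              modelDensity d α M (u k) (P k) x|) :=
      (hgf_int n).add ((integrable_finset_sum _ fun k _ => Iabs n k).const_mul 2)
    have := integral_mono hsup_int hRHS_int hpt
    rwa [integral_add (hgf_int n) ((integrable_finset_sum _ fun k _ => Iabs n k).const_mul 2),
      MeasureTheory.integral_const_mul,
      integral_finset_sum _ (fun k _ => Iabs n k)] at this
  have hb0 : ∀ n, 0 ≤ 2 * ∑ k : Fin K, ∫ x, |modelDensity d α M (uhat n k ω) (Phat n k ω) x -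
      modelDensity d α M (u k) (P k) x| := by
    intro n
    refine mul_nonneg (by norm_num) (Finset.sum_nonneg fun k _ => ?_)
    exact integral_nonneg fun x => abs_nonneg _
  have habs : ∀ n, ‖(∫ x, modelDensity d α M (u (fhat n ω x)) (P (fhat n ω x)) x)
      - ∫ x, ⨆ k, modelDensity d α M (u k) (P k) x‖
      ≤ 2 * ∑ k : Fin K, ∫ x, |modelDensity d α M (uhat n k ω) (Phat n k ω) x -
          modelDensity d α M (u k) (P k) x| := by
    intro n
    rw [Real.norm_eq_abs, abs_le]
    constructor
    · linarith [hle2 n]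
    · linarith [hle1 n, hb0 n]
  have h0 : Tendsto (fun n => (∫ x, modelDensity d α M (u (fhat n ω x)) (P (fhat n ω x)) x)
      - ∫ x, ⨆ k, modelDensity d α M (u k) (P k) x) atTop (nhds 0) :=
    squeeze_zero_norm habs hTsum
  have hr : Tendsto (fun n => ∫ x, modelDensity d α M (u (fhat n ω x)) (P (fhat n ω x)) x)
      atTop (nhds (∫ x, ⨆ k, modelDensity d α M (u k) (P k) x)) := by
    have h1 := h0.add_const (∫ x, ⨆ k, modelDensity d α M (u k) (P k) x)
    simpa using h1
  exact (hr.const_mul ((1 : ℝ) / K)).const_sub 1
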